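/- Let r and p be primes. If there exists an injective group homomorphism from PSL₂(ℤ/rℤ) into PSL₂(ℤ/pℤ), then r ≤ p. -/

import Mathlib

lemma upow (R : Type*) [CommRing R] (n : ℕ) :
    (!![1,1;0,1] : Matrix (Fin 2) (Fin 2) R) ^ n = !![1,(n:R);0,1] := by
  induction n with
  | zero => simp [Matrix.one_fin_two]
  | succ k ih =>
    rw [pow_succ, ih]
    rw [show ((k+1 : ℕ) : R) = (k : R) + 1 by push_cast; ring]
    ext i j
    fin_cases i <;> fin_cases j <;> simp [Matrix.mul_apply, Fin.sum_univ_two] <;> ring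

def uSL (m : ℕ) : Matrix.SpecialLinearGroup (Fin 2) (ZMod m) :=
  ⟨!![1,1;0,1], by simp [Matrix.det_fin_two_of]⟩

lemma uSL_pow (m n : ℕ) : (uSL m) ^ n = ⟨!![1,(n : ZMod m);0,1], by simp [Matrix.det_fin_two_of]⟩ := by
  ext i j
  have : ((uSL m : Matrix (Fin 2) (Fin 2) (ZMod m)) ^ n) = !![1,(n:ZMod m);0,1] := upow _ n
  calc ((uSL m ^ n : Matrix.SpecialLinearGroup (Fin 2) (ZMod m)) : Matrix (Fin 2) (Fin 2) (ZMod m)) i j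
      = ((uSL m : Matrix (Fin 2) (Fin 2) (ZMod m)) ^ n) i j := by
        rw [Matrix.SpecialLinearGroup.coe_pow]
    _ = _ := by rw [this]

lemma uSL_pow_self (m : ℕ) [NeZero m] : (uSL m) ^ m = 1 := by
  rw [uSL_pow]
  ext i j
  simp only [ZMod.natCast_self]
  fin_cases i <;> fin_cases j <;> simp [uSL, Matrix.one_fin_two]

lemma uSL_not_center (m : ℕ) (hm : 2 ≤ m) :
    uSL m ∉ Subgroup.center (Matrix.SpecialLinearGroup (Fin 2) (ZMod m)) := by
  have : NeZero m := ⟨by omega⟩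
  intro h
  rw [Subgroup.mem_center_iff] at h
  have hv := h ⟨!![1,0;1,1], by simp [Matrix.det_fin_two_of]⟩
  have h00 := congrArg (fun M : Matrix.SpecialLinearGroup (Fin 2) (ZMod m) =>
    (M : Matrix (Fin 2) (Fin 2) (ZMod m)) 0 0) hv
  change (!![1,0;1,1] * !![1,1;0,1] : Matrix (Fin 2) (Fin 2) (ZMod m)) 0 0 = (!![1,1;0,1] * !![1,0;1,1] : Matrix (Fin 2) (Fin 2) (ZMod m)) 0 0 at h00
  simp [uSL, Matrix.mul_apply, Fin.sum_univ_two] at h00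
  have : Fact (1 < m) := ⟨by omega⟩
  exact one_ne_zero h00

lemma order_mk_u (m : ℕ) (hm : m.Prime) :
    orderOf (QuotientGroup.mk (s := Subgroup.center (Matrix.SpecialLinearGroup (Fin 2) (ZMod m))) (uSL m)) = m := by
  have : NeZero m := ⟨hm.ne_zero⟩
  have hdvd : orderOf (QuotientGroup.mk (s := Subgroup.center _) (uSL m)) ∣ m := by
    apply orderOf_dvd_of_pow_eq_one
    rw [← QuotientGroup.mk_pow, uSL_pow_self]
    rfl
  rcases (Nat.Prime.eq_one_or_self_of_dvd hm _ hdvd) with h1 | h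
  · exfalso
    have : QuotientGroup.mk (s := Subgroup.center _) (uSL m) = 1 := orderOf_eq_one_iff.mp h1
    rw [QuotientGroup.eq_one_iff] at this
    exact uSL_not_center m hm.two_le this
  · exact h

def myDecEq (m : ℕ) : DecidableEq (Matrix.SpecialLinearGroup (Fin 2) (ZMod m)) :=
  fun a b => decidable_of_iff (a.1 = b.1) Subtype.ext_iff.symm

def myDecCenter (m : ℕ) [NeZero m] :
    DecidablePred (· ∈ Subgroup.center (Matrix.SpecialLinearGroup (Fin 2) (ZMod m))) :=
  letI := myDecEq m
  fun a => decidable_of_iff (∀ g, g * a = a * g) (Subgroup.mem_center_iff).symm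

set_option maxHeartbeats 1000000 in
lemma card_SL3 : Nat.card (Matrix.SpecialLinearGroup (Fin 2) (ZMod 3)) = 24 := by
  letI := myDecEq 3
  rw [Nat.card_eq_fintype_card]; decide

set_option maxHeartbeats 1000000 in
lemma card_center3 : Nat.card (Subgroup.center (Matrix.SpecialLinearGroup (Fin 2) (ZMod 3))) = 2 := by
  letI := myDecEq 3
  letI := myDecCenter 3
  rw [Nat.card_eq_fintype_card]; decide

set_option maxHeartbeats 1000000 in
lemma card_SL2 : Nat.card (Matrix.SpecialLinearGroup (Fin 2) (ZMod 2)) = 6 := by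
  letI := myDecEq 2
  rw [Nat.card_eq_fintype_card]; decide

lemma toGL_inj (m : ℕ) [NeZero m] :
    Function.Injective (Matrix.SpecialLinearGroup.toGL :
      Matrix.SpecialLinearGroup (Fin 2) (ZMod m) → GL (Fin 2) (ZMod m)) := by
  intro a b hab
  ext i j
  have := congrArg (fun u : GL (Fin 2) (ZMod m) => (u : Matrix (Fin 2) (Fin 2) (ZMod m)) i j) hab
  exact this

/-- card of SL divides card of GL -/
lemma card_SL_dvd_card_GL (m : ℕ) [NeZero m] :
    Nat.card (Matrix.SpecialLinearGroup (Fin 2) (ZMod m)) ∣ Nat.card (GL (Fin 2) (ZMod m)) := by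
  have e := MonoidHom.ofInjective (f := (Matrix.SpecialLinearGroup.toGL :
      Matrix.SpecialLinearGroup (Fin 2) (ZMod m) →* GL (Fin 2) (ZMod m))) (toGL_inj m)
  rw [Nat.card_congr e.toEquiv]
  exact Subgroup.card_subgroup_dvd_card _

set_option maxHeartbeats 2000000 in
/-- If `PSL₂(ℤ/rℤ)` embeds into `PSL₂(ℤ/pℤ)` for primes `r` and `p`, then `r ≤ p`. -/
theorem le_of_psl2_embeds (r p : ℕ) (hr : r.Prime) (hp : p.Prime)
    (f : (Matrix.SpecialLinearGroup (Fin 2) (ZMod r) ⧸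
            Subgroup.center (Matrix.SpecialLinearGroup (Fin 2) (ZMod r))) →*
          (Matrix.SpecialLinearGroup (Fin 2) (ZMod p) ⧸
            Subgroup.center (Matrix.SpecialLinearGroup (Fin 2) (ZMod p))))
    (hf : Function.Injective f) : r ≤ p := by
  have : NeZero r := ⟨hr.ne_zero⟩
  have : NeZero p := ⟨hp.ne_zero⟩
  -- the image of u has order r in PSL₂(p)
  have hor : orderOf (f (QuotientGroup.mk (uSL r))) = r := by
    rw [orderOf_injective f hf, order_mk_u r hr]
  have hrdvd : r ∣ Nat.card (Matrix.SpecialLinearGroup (Fin 2) (ZMod p) ⧸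
      Subgroup.center (Matrix.SpecialLinearGroup (Fin 2) (ZMod p))) := by
    rw [← hor]; exact orderOf_dvd_natCard _
  have hq : Nat.card (Matrix.SpecialLinearGroup (Fin 2) (ZMod p) ⧸
      Subgroup.center (Matrix.SpecialLinearGroup (Fin 2) (ZMod p))) ∣
      Nat.card (Matrix.SpecialLinearGroup (Fin 2) (ZMod p)) :=
    Dvd.intro _ (Subgroup.card_eq_card_quotient_mul_card_subgroup _).symm
  have hGL : r ∣ Nat.card (GL (Fin 2) (ZMod p)) :=
    (hrdvd.trans hq).trans (card_SL_dvd_card_GL p)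
  have hcard : Nat.card (GL (Fin 2) (ZMod p)) = (p^2 - 1) * (p^2 - p) := by
    have : Fact p.Prime := ⟨hp⟩
    have h := Matrix.card_GL_field (𝔽 := ZMod p) 2
    rw [ZMod.card, Fin.prod_univ_two] at h
    norm_num at h
    rw [Nat.card_eq_fintype_card]
    convert h using 2
  rw [hcard] at hGL
  have hp2 := hp.two_le
  have h1 : p^2 - 1 = (p+1) * (p-1) := by
    have := Nat.sq_sub_sq p 1
    simpa using this
  have h2 : p^2 - p = p * (p-1) := by
    cases p with
    | zero => simp
    | succ q => rw [Nat.succ_sub_one]; ring_nf; omega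
  rw [h1, h2] at hGL
  -- r divides (p+1) * ((p-1) * (p * (p-1)))
  have : r ∣ (p+1) ∨ r ∣ (p-1) ∨ r ∣ p := by
    rcases (Nat.Prime.dvd_mul hr).mp hGL with h | h
    · rcases (Nat.Prime.dvd_mul hr).mp h with h' | h'
      · exact Or.inl h'
      · exact Or.inr (Or.inl h')
    · rcases (Nat.Prime.dvd_mul hr).mp h with h' | h'
      · exact Or.inr (Or.inr h')
      · exact Or.inr (Or.inl h')
  rcases this with h | h | h
  · -- r ≤ p + 1
    have hle : r ≤ p + 1 := Nat.le_of_dvd (by omega) h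
    by_cases hc : r ≤ p
    · exact hc
    · -- r = p + 1; then p = 2, r = 3
      have hreq : r = p + 1 := by omega
      have hp2' : p = 2 := by
        rcases hp.eq_two_or_odd' with h2 | hodd
        · exact h2
        · exfalso
          have : Even r := by rw [hreq]; exact Odd.add_one hodd
          have := (Nat.Prime.even_iff hr).mp this
          omega
      have hr3 : r = 3 := by omega
      -- cardinality contradiction: |PSL₂(3)| = 12 > 6 ≥ |PSL₂(2)|
      exfalso
      subst hp2' hr3
      have hle12 : Nat.card (Matrix.SpecialLinearGroup (Fin 2) (ZMod 3) ⧸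
          Subgroup.center (Matrix.SpecialLinearGroup (Fin 2) (ZMod 3))) ≤
          Nat.card (Matrix.SpecialLinearGroup (Fin 2) (ZMod 2) ⧸
          Subgroup.center (Matrix.SpecialLinearGroup (Fin 2) (ZMod 2))) :=
        Nat.card_le_card_of_injective f hf
      have e3 := Subgroup.card_eq_card_quotient_mul_card_subgroup
        (Subgroup.center (Matrix.SpecialLinearGroup (Fin 2) (ZMod 3)))
      rw [card_SL3, card_center3] at e3
      have e2 := Subgroup.card_eq_card_quotient_mul_card_subgroup
        (Subgroup.center (Matrix.SpecialLinearGroup (Fin 2) (ZMod 2)))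
      rw [card_SL2] at e2
      have hpos : 0 < Nat.card (Subgroup.center (Matrix.SpecialLinearGroup (Fin 2) (ZMod 2))) :=
        Nat.card_pos
      nlinarith [hle12, e3, e2, hpos]
  · have : r ≤ p - 1 := Nat.le_of_dvd (by omega) h
    omega
  · have := (Nat.prime_dvd_prime_iff_eq hr hp).mp h
    omega
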